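/- Let p, q be integers with p, q ≥ 3, q odd, and 1/p + 1/q ≤ 1/2, and set N = q−2. Define coefficients β_l for 0 ≤ l ≤ N−1 by β_l = p−2 for l ≠ (N−1)/2 and β_{(N−1)/2} = p−4. Define σ : ℕ → ℤ by σ_0 = 1, σ_1 = p, and for n ≥ 1: σ_{n+1} = σ_1 + Σ_{l=0}^{n−1} β_l·σ_{n−l} if n < N; σ_{N+1} = Σ_{l=0}^{N−1} β_l·σ_{N−l}; σ_{n+1} = −σ_{n−N} + Σ_{l=0}^{N−1} β_l·σ_{n−l} if n > N. Then in ℤ[[z]], g_{p,q}(z)·(Σ_{n=0}^∞ σ_n z^n) = h_{p,q}(z), where g_{p,q}(z) = 1 − (p−2)z − ⋯ − (p−4)z^{(N+1)/2} − ⋯ − (p−2)z^N + z^{N+1} (coefficient −(p−2) for z^l, 1 ≤ l ≤ N, l ≠ (N+1)/2, and −(p−4) for z^{(N+1)/2}) and h_{p,q}(z) = 1 + 2z + ⋯ + 4z^{(N+1)/2} + ⋯ + 2z^N + z^{N+1} (coefficient 2 for z^l, 1 ≤ l ≤ N, l ≠ (N+1)/2, and 4 for z^{(N+1)/2}). -/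
import Mathlib


set_option maxRecDepth 4000 in
/-- for `q` odd, `N = q-2`, the sphere-cardinality sequence of the
`(p,q)`-regular tessellation (defined by the growth recursion of the paper's Theorem 2 with
coefficients `β l = p-2` except `β ((N-1)/2) = p-4`) has growth series satisfying
`g_{p,q}(z)·(Σ σ_n z^n) = h_{p,q}(z)` in `ℤ[[z]]`, where the coefficient of `z^l` in `g_{p,q}`
is `1` for `l ∈ {0, N+1}`, `-(p-2)` for `1 ≤ l ≤ N`, `l ≠ (N+1)/2`, and `-(p-4)` for
`l = (N+1)/2`; and in `h_{p,q}` it is `1` for `l ∈ {0, N+1}`, `2` for `1 ≤ l ≤ N`,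
`l ≠ (N+1)/2`, and `4` for `l = (N+1)/2`. -/
theorem growth_series_odd (p q : ℕ) (hp : 3 ≤ p) (hq : 3 ≤ q) (hqo : ¬ Even q)
    (hpq : (1 : ℝ) / p + 1 / q ≤ 1 / 2)
    (N : ℕ) (hN : N = q - 2)
    (β : ℕ → ℤ)
    (hβ : ∀ l, l ≤ N - 1 →
      β l = if l = (N - 1) / 2 then (p : ℤ) - 4 else (p : ℤ) - 2)
    (σ : ℕ → ℤ) (hσ0 : σ 0 = 1) (hσ1 : σ 1 = p)
    (hrec1 : ∀ n, 1 ≤ n → n < N →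
      σ (n + 1) = σ 1 + ∑ l ∈ Finset.range n, β l * σ (n - l))
    (hrec2 : 1 ≤ N → σ (N + 1) = ∑ l ∈ Finset.range N, β l * σ (N - l))
    (hrec3 : ∀ n, N < n →
      σ (n + 1) = -σ (n - N) + ∑ l ∈ Finset.range N, β l * σ (n - l)) :
    (PowerSeries.mk fun k =>
        if k = 0 ∨ k = N + 1 then (1 : ℤ)
        else if k ≤ N then (if k = (N + 1) / 2 then -((p : ℤ) - 4) else -((p : ℤ) - 2))
        else 0) *
      (PowerSeries.mk fun n => σ n) =
    (PowerSeries.mk fun k =>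
        if k = 0 ∨ k = N + 1 then (1 : ℤ)
        else if k ≤ N then (if k = (N + 1) / 2 then 4 else 2)
        else 0) := by
  classical
  have hqodd : q % 2 = 1 := Nat.odd_iff.mp (Nat.not_even_iff_odd.mp hqo)
  have hN1 : 1 ≤ N := by omega
  have hNodd : N % 2 = 1 := by omega
  set G : ℕ → ℤ := fun k =>
        if k = 0 ∨ k = N + 1 then (1 : ℤ)
        else if k ≤ N then (if k = (N + 1) / 2 then -((p : ℤ) - 4) else -((p : ℤ) - 2))
        else 0 with hGdef
  have hG0 : G 0 = 1 := by simp [hGdef]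
  have hGN1 : G (N + 1) = 1 := by simp [hGdef]
  have hGz : ∀ i, N + 1 < i → G i = 0 := by
    intro i hi
    simp only [hGdef]
    rw [if_neg (by omega), if_neg (by omega)]
  have hGβ : ∀ i, i < N → G (i + 1) = -β i := by
    intro i hi
    rw [hβ i (by omega)]
    simp only [hGdef]
    rw [if_neg (by omega), if_pos (by omega)]
    by_cases h : i = (N - 1) / 2
    · rw [if_pos (by omega), if_pos h]
    · rw [if_neg (by omega), if_neg h]
  ext n
  rw [PowerSeries.coeff_mul, Finset.Nat.sum_antidiagonal_eq_sum_range_succ_mk]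
  simp only [PowerSeries.coeff_mk]
  have step : ∀ m, 1 ≤ m → ∑ i ∈ Finset.range (m + 1), G i * σ (m - i)
      = σ m + ∑ i ∈ Finset.range m, G (i + 1) * σ (m - 1 - i) := by
    intro m hm
    rw [Finset.sum_range_succ',
      Finset.sum_congr rfl (fun i _ => by rw [show m - (i + 1) = m - 1 - i from by omega]),
      hG0, Nat.sub_zero, one_mul, add_comm]
  rcases Nat.eq_zero_or_pos n with h0 | h1
  · subst h0
    simp [hG0, hσ0]
  rcases lt_trichotomy n (N + 1) with hlt | heq | hgt
  · -- 1 ≤ n ≤ N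
    obtain ⟨m, rfl⟩ : ∃ m, n = m + 1 := ⟨n - 1, by omega⟩
    rw [step _ (by omega), Finset.sum_range_succ]
    rw [Finset.sum_congr rfl (fun i hi => by
      rw [hGβ i (by simp only [Finset.mem_range] at hi; omega)])]
    have hGm : G (m + 1) = -β m := hGβ m (by omega)
    have hkey : σ (m + 1) - ∑ i ∈ Finset.range m, β i * σ (m - i) = σ 1 := by
      rcases Nat.eq_zero_or_pos m with hm0 | hm1
      · subst hm0; simp [hσ1]
      · rw [hrec1 m hm1 (by omega)]; ring
    have hσm : σ (m + 1 - 1 - m) = 1 := by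
      simpa using hσ0
    have hβm : β m = if m = (N - 1) / 2 then (p : ℤ) - 4 else (p : ℤ) - 2 :=
      hβ m (by omega)
    have hsum : ∀ i ∈ Finset.range m, (-β i) * σ (m + 1 - 1 - i) = -(β i * σ (m - i)) := by
      intro i hi
      simp only [Finset.mem_range] at hi
      have : m + 1 - 1 - i = m - i := by omega
      rw [this]; ring
    rw [Finset.sum_congr rfl hsum, Finset.sum_neg_distrib, hGm, hσm]
    have hrhs : (if m + 1 = 0 ∨ m + 1 = N + 1 then (1 : ℤ)
        else if m + 1 ≤ N then (if m + 1 = (N + 1) / 2 then 4 else 2) else 0)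
        = if m = (N - 1) / 2 then (4 : ℤ) else 2 := by
      rw [if_neg (by omega), if_pos (by omega)]
      by_cases h : m = (N - 1) / 2
      · rw [if_pos (by omega), if_pos h]
      · rw [if_neg (by omega), if_neg h]
    rw [hrhs]
    have : σ (m + 1) + (-∑ i ∈ Finset.range m, β i * σ (m - i) + -β m * 1)
        = σ 1 - β m := by
      rw [← hkey]; ring
    rw [this, hσ1, hβm]
    split_ifs <;> ring
  · -- n = N + 1
    subst heq
    rw [step _ (by omega), Finset.sum_range_succ, hGN1,
      Finset.sum_congr rfl (fun i hi => by
        rw [hGβ i (by simp only [Finset.mem_range] at hi; omega)])]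
    have hsum : ∀ i ∈ Finset.range N, (-β i) * σ (N + 1 - 1 - i) = -(β i * σ (N - i)) := by
      intro i hi
      have : N + 1 - 1 - i = N - i := by omega
      rw [this]; ring
    rw [Finset.sum_congr rfl hsum, Finset.sum_neg_distrib]
    have hσz : σ (N + 1 - 1 - N) = 1 := by simpa using hσ0
    rw [hσz, hrec2 hN1]
    rw [if_pos (by omega)]
    ring
  · -- n > N + 1
    rw [← Finset.sum_subset (Finset.range_subset_range.mpr (show N + 2 ≤ n + 1 by omega))
      (fun i _ hi => by
        rw [hGz i (by simp only [Finset.mem_range] at hi; omega), zero_mul])]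
    have hstep2 : ∑ i ∈ Finset.range (N + 2), G i * σ (n - i)
        = σ n + ∑ i ∈ Finset.range (N + 1), G (i + 1) * σ (n - 1 - i) := by
      rw [Finset.sum_range_succ',
        Finset.sum_congr rfl (fun i _ => by rw [show n - (i + 1) = n - 1 - i from by omega]),
        hG0, Nat.sub_zero, one_mul, add_comm]
    rw [hstep2, Finset.sum_range_succ, hGN1,
      Finset.sum_congr rfl (fun i hi => by
        rw [hGβ i (by simp only [Finset.mem_range] at hi; omega)])]
    have hsum : ∀ i ∈ Finset.range N, (-β i) * σ (n - 1 - i) = -(β i * σ (n - 1 - i)) := by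
      intro i _; ring
    rw [Finset.sum_congr rfl hsum, Finset.sum_neg_distrib]
    have hr3 := hrec3 (n - 1) (by omega)
    rw [show n - 1 + 1 = n by omega] at hr3
    rw [if_neg (by omega), if_neg (by omega)]
    rw [show n - 1 - N = n - N - 1 from by omega] at hr3 ⊢
    rw [hr3]
    ring
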